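/- If a₁ ≠ a₀/2 (which can occur only when the periodic potential φ is asymmetric), then there exists a nonzero force f such that D(f) < 1/a₀ = D(0); in particular the minimum of the effective diffusion coefficient is attained at a nonzero value of f and is strictly smaller than 1/a₀. -/

import Mathlib

open MeasureTheory intervalIntegral Asymptotics Filter
open Topology

noncomputable def w0 (φ : ℝ → ℝ) (f x : ℝ) : ℝ :=
  ∫ s in (0:ℝ)..1, Real.exp (φ (x + s) - φ x - f * s)

noncomputable def M0 (φ : ℝ → ℝ) (f : ℝ) : ℝ := ∫ x in (0:ℝ)..1, w0 φ f x

noncomputable def w1 (φ : ℝ → ℝ) (f x : ℝ) : ℝ :=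
  ∫ s in (0:ℝ)..1, (w0 φ f (x + s)) ^ 2 * Real.exp (φ (x + s) - φ x - f * s)

noncomputable def M1 (φ : ℝ → ℝ) (f : ℝ) : ℝ := ∫ x in (0:ℝ)..1, w1 φ f x



noncomputable def W0' (φ : ℝ → ℝ) (f x : ℝ) : ℝ :=
  ∫ s in (0:ℝ)..1, (-s) * Real.exp (φ (x + s) - φ x - f * s)

lemma phi_bound {φ : ℝ → ℝ} (hφc : Continuous φ) (hφper : ∀ x, φ (x + 1) = φ x) :
    ∃ K : ℝ, 0 ≤ K ∧ ∀ x, |φ x| ≤ K := by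
  obtain ⟨K, hK⟩ := (isCompact_Icc (a := (0:ℝ)) (b := 1)).exists_bound_of_continuousOn
    hφc.continuousOn
  refine ⟨max K 0, le_max_right _ _, fun x => ?_⟩
  have hper : Function.Periodic φ 1 := hφper
  have h1 : φ (x - (⌊x⌋ : ℝ) * 1) = φ x := hper.sub_int_mul_eq ⌊x⌋
  have h2 : φ x = φ (Int.fract x) := by
    rw [← h1]; congr 1; rw [Int.fract]; ring
  rw [h2]
  exact le_trans (hK _ ⟨Int.fract_nonneg x, (Int.fract_lt_one x).le⟩) (le_max_left _ _)

lemma shift_int (g : ℝ → ℝ) (hper : Function.Periodic g 1) (x : ℝ) :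
    ∫ s in (0:ℝ)..1, g (x + s) = ∫ s in (0:ℝ)..1, g s := by
  rw [intervalIntegral.integral_comp_add_left g x]
  simpa using hper.intervalIntegral_add_eq x 0

lemma fubini01 (F : ℝ → ℝ → ℝ) (hF : Continuous (Function.uncurry F)) :
    (∫ x in (0:ℝ)..1, ∫ s in (0:ℝ)..1, F x s) = ∫ s in (0:ℝ)..1, ∫ x in (0:ℝ)..1, F x s := by
  have h01 : (0:ℝ) ≤ 1 := zero_le_one
  have hint : Integrable (Function.uncurry F)
      ((volume.restrict (Set.Ioc (0:ℝ) 1)).prod (volume.restrict (Set.Ioc (0:ℝ) 1))) := by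
    rw [Measure.prod_restrict]
    refine (hF.continuousOn.integrableOn_compact
      ((isCompact_Icc (a := (0:ℝ)) (b := 1)).prod (isCompact_Icc (a := (0:ℝ)) (b := 1)))).mono_set ?_
    exact Set.prod_mono Set.Ioc_subset_Icc_self Set.Ioc_subset_Icc_self
  simp_rw [intervalIntegral.integral_of_le h01]
  exact MeasureTheory.integral_integral_swap hint

lemma w0_cont {φ : ℝ → ℝ} (hφc : Continuous φ) :
    Continuous (fun p : ℝ × ℝ => w0 φ p.1 p.2) := by
  have : Continuous (Function.uncurry
      (fun (p : ℝ × ℝ) (s : ℝ) => Real.exp (φ (p.2 + s) - φ p.2 - p.1 * s))) := by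
    fun_prop
  exact intervalIntegral.continuous_parametric_intervalIntegral_of_continuous' this 0 1

lemma W0'_cont {φ : ℝ → ℝ} (hφc : Continuous φ) :
    Continuous (fun p : ℝ × ℝ => W0' φ p.1 p.2) := by
  have : Continuous (Function.uncurry
      (fun (p : ℝ × ℝ) (s : ℝ) => (-s) * Real.exp (φ (p.2 + s) - φ p.2 - p.1 * s))) := by
    fun_prop
  exact intervalIntegral.continuous_parametric_intervalIntegral_of_continuous' this 0 1

lemma exp_arg_le {φ : ℝ → ℝ} {K : ℝ} (hK : ∀ x, |φ x| ≤ K) {g f : ℝ} (hg : |g| ≤ |f| + 1)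
    {s : ℝ} (hs : |s| ≤ 1) (x : ℝ) :
    Real.exp (φ (x + s) - φ x - g * s) ≤ Real.exp (2 * K + (|f| + 1)) := by
  apply Real.exp_le_exp.2
  have h1 := abs_le.1 (hK (x + s))
  have h2 := abs_le.1 (hK x)
  have h3 : |g * s| ≤ |f| + 1 := by
    rw [abs_mul]
    calc |g| * |s| ≤ (|f| + 1) * 1 := by
          apply mul_le_mul hg hs (abs_nonneg s) (by positivity)
      _ = |f| + 1 := mul_one _
  have h4 := abs_le.1 h3
  linarith [h1.1, h1.2, h2.1, h2.2, h4.1, h4.2]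

lemma w0_le {φ : ℝ → ℝ} {K : ℝ} (hφc : Continuous φ) (hK : ∀ x, |φ x| ≤ K)
    {g f : ℝ} (hg : |g| ≤ |f| + 1) (x : ℝ) :
    |w0 φ g x| ≤ Real.exp (2 * K + (|f| + 1)) := by
  have h := intervalIntegral.norm_integral_le_of_norm_le_const
    (C := Real.exp (2 * K + (|f| + 1)))
    (f := fun s => Real.exp (φ (x + s) - φ x - g * s)) (a := 0) (b := 1) ?_
  · simpa [w0] using h
  · intro s hs
    rw [Set.uIoc_of_le (zero_le_one (α := ℝ))] at hs
    have hs1 : |s| ≤ 1 := abs_le.2 ⟨by linarith [hs.1], hs.2⟩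
    rw [Real.norm_eq_abs, abs_of_pos (Real.exp_pos _)]
    exact exp_arg_le hK hg hs1 x

lemma W0'_le {φ : ℝ → ℝ} {K : ℝ} (hφc : Continuous φ) (hK : ∀ x, |φ x| ≤ K)
    {g f : ℝ} (hg : |g| ≤ |f| + 1) (x : ℝ) :
    |W0' φ g x| ≤ Real.exp (2 * K + (|f| + 1)) := by
  have h := intervalIntegral.norm_integral_le_of_norm_le_const
    (C := Real.exp (2 * K + (|f| + 1)))
    (f := fun s => (-s) * Real.exp (φ (x + s) - φ x - g * s)) (a := 0) (b := 1) ?_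
  · simpa [W0'] using h
  · intro s hs
    rw [Set.uIoc_of_le (zero_le_one (α := ℝ))] at hs
    have hs1 : |s| ≤ 1 := abs_le.2 ⟨by linarith [hs.1], hs.2⟩
    rw [Real.norm_eq_abs, abs_mul, abs_neg]
    calc |s| * |Real.exp (φ (x + s) - φ x - g * s)|
        ≤ 1 * Real.exp (2 * K + (|f| + 1)) := by
          apply mul_le_mul hs1 _ (abs_nonneg _) zero_le_one
          rw [abs_of_pos (Real.exp_pos _)]
          exact exp_arg_le hK hg hs1 x
      _ = _ := one_mul _

lemma expE_hasDerivAt (φ : ℝ → ℝ) (x s g : ℝ) :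
    HasDerivAt (fun g : ℝ => Real.exp (φ (x + s) - φ x - g * s))
      ((-s) * Real.exp (φ (x + s) - φ x - g * s)) g := by
  have h0 : HasDerivAt (fun g : ℝ => φ (x + s) - φ x - g * s) (-s) g := by
    simpa using ((hasDerivAt_id g).mul_const s).const_sub (φ (x + s) - φ x)
  simpa [mul_comm] using h0.exp

lemma w0_hasDerivAt {φ : ℝ → ℝ} (hφc : Continuous φ) {K : ℝ} (hK : ∀ x, |φ x| ≤ K)
    (f x : ℝ) : HasDerivAt (fun g => w0 φ g x) (W0' φ f x) f := by
  have h := intervalIntegral.hasDerivAt_integral_of_dominated_loc_of_deriv_le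
    (F := fun (g : ℝ) (s : ℝ) => Real.exp (φ (x + s) - φ x - g * s))
    (F' := fun (g : ℝ) (s : ℝ) => (-s) * Real.exp (φ (x + s) - φ x - g * s))
    (x₀ := f) (a := 0) (b := 1) (μ := volume)
    (bound := fun _ => Real.exp (2 * K + (|f| + 1)))
    (s := Metric.ball f 1) (Metric.ball_mem_nhds f one_pos) ?_ ?_ ?_ ?_ ?_ ?_
  · exact h.2
  · exact Eventually.of_forall fun g =>
      (Continuous.aestronglyMeasurable (by fun_prop))
  · exact (Continuous.intervalIntegrable (by fun_prop) _ _)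
  · exact Continuous.aestronglyMeasurable (by fun_prop)
  · refine Eventually.of_forall fun s hs g hg => ?_
    rw [Set.uIoc_of_le (zero_le_one (α := ℝ))] at hs
    have hs1 : |s| ≤ 1 := abs_le.2 ⟨by linarith [hs.1], hs.2⟩
    have hg1 : |g| ≤ |f| + 1 := by
      have := mem_ball_iff_norm.1 hg
      calc |g| = |f + (g - f)| := by ring_nf
        _ ≤ |f| + |g - f| := abs_add_le _ _
        _ ≤ |f| + 1 := by have := le_of_lt this; simp [Real.norm_eq_abs] at this; linarith
    rw [Real.norm_eq_abs, abs_mul, abs_neg]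
    calc |s| * |Real.exp (φ (x + s) - φ x - g * s)|
        ≤ 1 * Real.exp (2 * K + (|f| + 1)) := by
          apply mul_le_mul hs1 _ (abs_nonneg _) zero_le_one
          rw [abs_of_pos (Real.exp_pos _)]
          exact exp_arg_le hK hg1 hs1 x
      _ = _ := one_mul _
  · exact intervalIntegrable_const
  · exact Eventually.of_forall fun s _ g _ => expE_hasDerivAt φ x s g

lemma ball_abs_le {f g : ℝ} (hg : g ∈ Metric.ball f 1) : |g| ≤ |f| + 1 := by
  have := mem_ball_iff_norm.1 hg
  rw [Real.norm_eq_abs] at this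
  calc |g| = |f + (g - f)| := by ring_nf
    _ ≤ |f| + |g - f| := abs_add_le _ _
    _ ≤ |f| + 1 := by linarith

lemma uIoc_abs_le {s : ℝ} (hs : s ∈ Set.uIoc (0:ℝ) 1) : |s| ≤ 1 := by
  rw [Set.uIoc_of_le (zero_le_one (α := ℝ))] at hs
  exact abs_le.2 ⟨by linarith [hs.1], hs.2⟩


set_option maxHeartbeats 1000000 in
lemma M0_hasDerivAt {φ : ℝ → ℝ} (hφc : Continuous φ) {K : ℝ} (hK : ∀ x, |φ x| ≤ K)
    (f : ℝ) : HasDerivAt (M0 φ) (∫ x in (0:ℝ)..1, W0' φ f x) f := by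
  have hmeas : ∀ g : ℝ, Continuous (fun x => w0 φ g x) := fun g =>
    intervalIntegral.continuous_parametric_intervalIntegral_of_continuous'
      (f := fun (x : ℝ) (s : ℝ) => Real.exp (φ (x + s) - φ x - g * s)) (by fun_prop) 0 1
  have hmeas' : Continuous (fun x => W0' φ f x) :=
    intervalIntegral.continuous_parametric_intervalIntegral_of_continuous'
      (f := fun (x : ℝ) (s : ℝ) => (-s) * Real.exp (φ (x + s) - φ x - f * s)) (by fun_prop) 0 1
  have h := intervalIntegral.hasDerivAt_integral_of_dominated_loc_of_deriv_le
    (F := fun (g : ℝ) (x : ℝ) => w0 φ g x)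
    (F' := fun (g : ℝ) (x : ℝ) => W0' φ g x)
    (x₀ := f) (a := 0) (b := 1) (μ := volume)
    (bound := fun _ => Real.exp (2 * K + (|f| + 1)))
    (s := Metric.ball f 1) (Metric.ball_mem_nhds f one_pos)
    (Eventually.of_forall fun g => (hmeas g).aestronglyMeasurable)
    ((hmeas f).intervalIntegrable _ _)
    hmeas'.aestronglyMeasurable
    (Eventually.of_forall fun x _ g hg => by
      rw [Real.norm_eq_abs]; exact W0'_le hφc hK (ball_abs_le hg) x)
    intervalIntegrable_const
    (Eventually.of_forall fun x _ g _ => w0_hasDerivAt hφc hK g x)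
  exact h.2


noncomputable def W1' (φ : ℝ → ℝ) (f x : ℝ) : ℝ :=
  ∫ s in (0:ℝ)..1,
    (2 * w0 φ f (x + s) * W0' φ f (x + s)) * Real.exp (φ (x + s) - φ x - f * s)
      + (w0 φ f (x + s)) ^ 2 * (Real.exp (φ (x + s) - φ x - f * s) * (-s))

lemma w1_contx {φ : ℝ → ℝ} (hφc : Continuous φ) (g : ℝ) :
    Continuous (fun x => w1 φ g x) := by
  have hw := w0_cont hφc
  have h : Continuous (fun q : ℝ × ℝ =>
      (w0 φ g (q.1 + q.2)) ^ 2 * Real.exp (φ (q.1 + q.2) - φ q.1 - g * q.2)) := by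
    refine Continuous.mul ?_ (by fun_prop)
    exact (hw.comp (show Continuous fun q : ℝ × ℝ => ((g, q.1 + q.2) : ℝ × ℝ) by fun_prop)).pow 2
  exact intervalIntegral.continuous_parametric_intervalIntegral_of_continuous'
    (f := fun (x : ℝ) (s : ℝ) =>
      (w0 φ g (x + s)) ^ 2 * Real.exp (φ (x + s) - φ x - g * s)) h 0 1

lemma W1'_contx {φ : ℝ → ℝ} (hφc : Continuous φ) (g : ℝ) :
    Continuous (fun x => W1' φ g x) := by
  have hw := w0_cont hφc
  have hW := W0'_cont hφc
  have hc : Continuous fun q : ℝ × ℝ => ((g, q.1 + q.2) : ℝ × ℝ) := by fun_prop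
  have hE : Continuous (fun q : ℝ × ℝ =>
      Real.exp (φ (q.1 + q.2) - φ q.1 - g * q.2)) := by fun_prop
  have h : Continuous (fun q : ℝ × ℝ =>
      (2 * w0 φ g (q.1 + q.2) * W0' φ g (q.1 + q.2)) *
          Real.exp (φ (q.1 + q.2) - φ q.1 - g * q.2)
        + (w0 φ g (q.1 + q.2)) ^ 2 *
          (Real.exp (φ (q.1 + q.2) - φ q.1 - g * q.2) * (-q.2))) := by
    refine Continuous.add ?_ ?_
    · exact ((continuous_const.mul (hw.comp hc)).mul (hW.comp hc)).mul hE
    · exact ((hw.comp hc).pow 2).mul (hE.mul continuous_snd.neg)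
  exact intervalIntegral.continuous_parametric_intervalIntegral_of_continuous'
    (f := fun (x : ℝ) (s : ℝ) =>
      (2 * w0 φ g (x + s) * W0' φ g (x + s)) * Real.exp (φ (x + s) - φ x - g * s)
        + (w0 φ g (x + s)) ^ 2 * (Real.exp (φ (x + s) - φ x - g * s) * (-s))) h 0 1

lemma W1'_integrand_le {φ : ℝ → ℝ} {K : ℝ} (hφc : Continuous φ) (hK : ∀ x, |φ x| ≤ K)
    {g f : ℝ} (hg : |g| ≤ |f| + 1) {s : ℝ} (hs : |s| ≤ 1) (x : ℝ) :
    |(2 * w0 φ g (x + s) * W0' φ g (x + s)) * Real.exp (φ (x + s) - φ x - g * s)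
      + (w0 φ g (x + s)) ^ 2 * (Real.exp (φ (x + s) - φ x - g * s) * (-s))|
      ≤ 3 * (Real.exp (2 * K + (|f| + 1))) ^ 3 := by
  set c := Real.exp (2 * K + (|f| + 1)) with hc
  have hw := w0_le hφc hK hg (x + s)
  have hW := W0'_le hφc hK hg (x + s)
  have hE : Real.exp (φ (x + s) - φ x - g * s) ≤ c := exp_arg_le hK hg hs x
  have hEpos : (0:ℝ) < Real.exp (φ (x + s) - φ x - g * s) := Real.exp_pos _
  calc |(2 * w0 φ g (x + s) * W0' φ g (x + s)) * Real.exp (φ (x + s) - φ x - g * s)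
      + (w0 φ g (x + s)) ^ 2 * (Real.exp (φ (x + s) - φ x - g * s) * (-s))|
      ≤ |(2 * w0 φ g (x + s) * W0' φ g (x + s)) * Real.exp (φ (x + s) - φ x - g * s)|
        + |(w0 φ g (x + s)) ^ 2 * (Real.exp (φ (x + s) - φ x - g * s) * (-s))| := abs_add_le _ _
    _ = 2 * |w0 φ g (x + s)| * |W0' φ g (x + s)| * Real.exp (φ (x + s) - φ x - g * s)
        + |w0 φ g (x + s)| ^ 2 * (Real.exp (φ (x + s) - φ x - g * s) * |s|) := by
        rw [abs_mul, abs_mul, abs_mul, abs_mul, abs_mul, abs_neg, abs_pow,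
          abs_of_pos hEpos]
        norm_num
    _ ≤ 2 * c * c * c + c ^ 2 * (c * 1) := by
        gcongr <;> first
          | exact hw | exact hW | exact hE | exact hs
          | positivity
          | exact le_trans (abs_nonneg _) hw
    _ = 3 * c ^ 3 := by ring

lemma w1_hasDerivAt {φ : ℝ → ℝ} (hφc : Continuous φ) {K : ℝ} (hK : ∀ x, |φ x| ≤ K)
    (f x : ℝ) : HasDerivAt (fun g => w1 φ g x) (W1' φ f x) f := by
  have hw := w0_cont hφc
  have hW := W0'_cont hφc
  have hmeas : ∀ g : ℝ, Continuous (fun s =>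
      (w0 φ g (x + s)) ^ 2 * Real.exp (φ (x + s) - φ x - g * s)) := by
    intro g
    refine Continuous.mul ?_ (by fun_prop)
    exact (hw.comp (show Continuous fun s : ℝ => ((g, x + s) : ℝ × ℝ) by fun_prop)).pow 2
  have hmeas' : Continuous (fun s =>
      (2 * w0 φ f (x + s) * W0' φ f (x + s)) * Real.exp (φ (x + s) - φ x - f * s)
        + (w0 φ f (x + s)) ^ 2 * (Real.exp (φ (x + s) - φ x - f * s) * (-s))) := by
    have hc : Continuous fun s : ℝ => ((f, x + s) : ℝ × ℝ) := by fun_prop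
    refine Continuous.add ?_ ?_
    · exact ((continuous_const.mul (hw.comp hc)).mul (hW.comp hc)).mul (by fun_prop)
    · exact ((hw.comp hc).pow 2).mul (by fun_prop)
  have h := intervalIntegral.hasDerivAt_integral_of_dominated_loc_of_deriv_le
    (F := fun (g : ℝ) (s : ℝ) => (w0 φ g (x + s)) ^ 2 * Real.exp (φ (x + s) - φ x - g * s))
    (F' := fun (g : ℝ) (s : ℝ) =>
      (2 * w0 φ g (x + s) * W0' φ g (x + s)) * Real.exp (φ (x + s) - φ x - g * s)
        + (w0 φ g (x + s)) ^ 2 * (Real.exp (φ (x + s) - φ x - g * s) * (-s)))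
    (x₀ := f) (a := 0) (b := 1) (μ := volume)
    (bound := fun _ => 3 * (Real.exp (2 * K + (|f| + 1))) ^ 3)
    (s := Metric.ball f 1) (Metric.ball_mem_nhds f one_pos)
    (Eventually.of_forall fun g => (hmeas g).aestronglyMeasurable)
    ((hmeas f).intervalIntegrable _ _)
    hmeas'.aestronglyMeasurable
    (Eventually.of_forall fun s hs g hg => by
      rw [Real.norm_eq_abs]
      exact W1'_integrand_le hφc hK (ball_abs_le hg) (uIoc_abs_le hs) x)
    intervalIntegrable_const
    (Eventually.of_forall fun s _ g _ => by
      have hwd : HasDerivAt (fun g => w0 φ g (x + s)) (W0' φ g (x + s)) g :=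
        w0_hasDerivAt hφc hK g (x + s)
      have h2 := (hwd.fun_pow 2).mul (expE_hasDerivAt φ x s g)
      exact h2.congr_deriv (by ring))
  exact h.2


set_option maxHeartbeats 1000000 in
lemma M1_hasDerivAt {φ : ℝ → ℝ} (hφc : Continuous φ) {K : ℝ} (hK : ∀ x, |φ x| ≤ K)
    (f : ℝ) : HasDerivAt (M1 φ) (∫ x in (0:ℝ)..1, W1' φ f x) f := by
  have h := intervalIntegral.hasDerivAt_integral_of_dominated_loc_of_deriv_le
    (F := fun (g : ℝ) (x : ℝ) => w1 φ g x)
    (F' := fun (g : ℝ) (x : ℝ) => W1' φ g x)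
    (x₀ := f) (a := 0) (b := 1) (μ := volume)
    (bound := fun _ => 3 * (Real.exp (2 * K + (|f| + 1))) ^ 3)
    (s := Metric.ball f 1) (Metric.ball_mem_nhds f one_pos)
    (Eventually.of_forall fun g => (w1_contx hφc g).aestronglyMeasurable)
    ((w1_contx hφc f).intervalIntegrable _ _)
    (W1'_contx hφc f).aestronglyMeasurable
    (Eventually.of_forall fun x _ g hg => by
      rw [Real.norm_eq_abs]
      unfold W1'
      have hb := intervalIntegral.norm_integral_le_of_norm_le_const
        (C := 3 * (Real.exp (2 * K + (|f| + 1))) ^ 3)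
        (f := fun s =>
          (2 * w0 φ g (x + s) * W0' φ g (x + s)) * Real.exp (φ (x + s) - φ x - g * s)
            + (w0 φ g (x + s)) ^ 2 * (Real.exp (φ (x + s) - φ x - g * s) * (-s)))
        (a := 0) (b := 1) ?_
      · simpa using hb
      · intro s hs
        rw [Real.norm_eq_abs]
        exact W1'_integrand_le hφc hK (ball_abs_le hg) (uIoc_abs_le hs) x)
    intervalIntegrable_const
    (Eventually.of_forall fun x _ g _ => w1_hasDerivAt hφc hK g x)
  exact h.2

variable {φ : ℝ → ℝ}

lemma w0_zero (hφper : ∀ x, φ (x + 1) = φ x) (x : ℝ) :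
    w0 φ 0 x = (∫ s in (0:ℝ)..1, Real.exp (φ s)) * Real.exp (-φ x) := by
  unfold w0
  have h : ∀ s : ℝ, Real.exp (φ (x + s) - φ x - 0 * s)
      = Real.exp (φ (x + s)) * Real.exp (-φ x) := by
    intro s; rw [← Real.exp_add]; congr 1; ring
  simp_rw [h]
  rw [intervalIntegral.integral_mul_const,
    shift_int (fun u => Real.exp (φ u)) (fun u => by simp [hφper u]) x]

lemma M0_zero (hφper : ∀ x, φ (x + 1) = φ x) :
    M0 φ 0 = (∫ x in (0:ℝ)..1, Real.exp (-φ x)) * (∫ s in (0:ℝ)..1, Real.exp (φ s)) := by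
  unfold M0
  simp_rw [w0_zero hφper]
  rw [intervalIntegral.integral_const_mul]
  ring

lemma w1_zero (hφper : ∀ x, φ (x + 1) = φ x) (x : ℝ) :
    w1 φ 0 x = (∫ s in (0:ℝ)..1, Real.exp (φ s)) ^ 2
      * ((∫ x in (0:ℝ)..1, Real.exp (-φ x)) * Real.exp (-φ x)) := by
  unfold w1
  have h : ∀ s : ℝ, (w0 φ 0 (x + s)) ^ 2 * Real.exp (φ (x + s) - φ x - 0 * s)
      = (∫ s in (0:ℝ)..1, Real.exp (φ s)) ^ 2
          * (Real.exp (-φ x) * Real.exp (-φ (x + s))) := by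
    intro s
    rw [w0_zero hφper (x + s), mul_pow, pow_two (Real.exp (-φ (x + s)))]
    simp only [← Real.exp_add, mul_assoc]
    congr 1
    rw [Real.exp_eq_exp]
    ring
  simp_rw [h]
  rw [intervalIntegral.integral_const_mul]
  congr 1
  rw [intervalIntegral.integral_const_mul,
    shift_int (fun u => Real.exp (-φ u)) (fun u => by simp [hφper u]) x]
  ring

lemma M1_zero (hφper : ∀ x, φ (x + 1) = φ x) :
    M1 φ 0 = ((∫ x in (0:ℝ)..1, Real.exp (-φ x)) * (∫ s in (0:ℝ)..1, Real.exp (φ s))) ^ 2 := by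
  unfold M1
  simp_rw [w1_zero hφper]
  rw [intervalIntegral.integral_const_mul, intervalIntegral.integral_const_mul]
  ring

noncomputable def Aa (φ : ℝ → ℝ) (x : ℝ) : ℝ :=
  ∫ s in (0:ℝ)..1, Real.exp (φ (x + s) - φ x) * s

lemma Aa_cont (hφc : Continuous φ) : Continuous (Aa φ) := by
  exact intervalIntegral.continuous_parametric_intervalIntegral_of_continuous'
    (f := fun (x : ℝ) (s : ℝ) => Real.exp (φ (x + s) - φ x) * s) (by fun_prop) 0 1

lemma Aa_per (hφper : ∀ x, φ (x + 1) = φ x) : ∀ x, Aa φ (x + 1) = Aa φ x := by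
  intro x
  unfold Aa
  congr 1
  funext s
  rw [show x + 1 + s = (x + s) + 1 by ring, hφper (x + s), hφper x]

lemma W0'_zero (x : ℝ) : W0' φ 0 x = -(Aa φ x) := by
  unfold W0' Aa
  rw [← intervalIntegral.integral_neg]
  congr 1
  funext s
  rw [show φ (x + s) - φ x - 0 * s = φ (x + s) - φ x by ring]
  ring

lemma M0'_zero :
    (∫ x in (0:ℝ)..1, W0' φ 0 x) = -∫ x in (0:ℝ)..1, Aa φ x := by
  simp_rw [W0'_zero]
  exact intervalIntegral.integral_neg


lemma intcongr {f g : ℝ → ℝ} {a b : ℝ} (h : ∀ x, f x = g x) :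
    (∫ x in a..b, f x) = ∫ x in a..b, g x := by
  have : f = g := funext h
  rw [this]

lemma Jlemma {ψ : ℝ → ℝ} (hc : Continuous ψ) (hp : ∀ x, ψ (x + 1) = ψ x) :
    (∫ x in (0:ℝ)..1, ψ x * ∫ s in (0:ℝ)..1, ψ (x + s) * s)
      = (∫ x in (0:ℝ)..1, ψ x) ^ 2 / 2 := by
  set H : ℝ → ℝ := fun s => ∫ x in (0:ℝ)..1, ψ x * ψ (x + s) with hH
  have Hcont : Continuous H :=
    intervalIntegral.continuous_parametric_intervalIntegral_of_continuous'
      (f := fun (s : ℝ) (x : ℝ) => ψ x * ψ (x + s)) (by fun_prop) 0 1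
  have Hsym : ∀ s, H (1 - s) = H s := by
    intro s
    have h2 : H (1 - s) = ∫ x in (0:ℝ)..1, ψ x * ψ (x - s) := by
      rw [hH]
      exact intcongr fun x => by rw [show x + (1 - s) = (x - s) + 1 by ring, hp]
    have h3 := shift_int (fun u => ψ u * ψ (u - s))
      (fun u => by simp only [hp u, show u + 1 - s = (u - s) + 1 by ring, hp (u - s)]) s
    rw [h2, ← h3, hH]
    exact intcongr fun x => by
      rw [show s + x - s = x by ring, show s + x = x + s by ring]
      ring
  have HInt : IntervalIntegrable H volume 0 1 := Hcont.intervalIntegrable _ _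
  have HsInt : IntervalIntegrable (fun s => H s * s) volume 0 1 :=
    (Hcont.mul continuous_id).intervalIntegrable _ _
  have key : (∫ s in (0:ℝ)..1, H s * s) * 2 = ∫ s in (0:ℝ)..1, H s := by
    have h4 := intervalIntegral.integral_comp_sub_left (a := 0) (b := 1) (fun u => H u * u) 1
    norm_num at h4
    -- h4 : ∫ s in 0..1, H (1 - s) * (1 - s) = ∫ u in 0..1, H u * u
    have h5 : (∫ s in (0:ℝ)..1, H (1 - s) * (1 - s)) = ∫ s in (0:ℝ)..1, (H s - H s * s) :=
      intcongr fun s => by rw [Hsym s]; ring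
    rw [h5, intervalIntegral.integral_sub HInt HsInt] at h4
    linarith
  have fub1 : (∫ x in (0:ℝ)..1, ψ x * ∫ s in (0:ℝ)..1, ψ (x + s) * s)
      = ∫ s in (0:ℝ)..1, H s * s := by
    simp_rw [← intervalIntegral.integral_const_mul]
    rw [fubini01 (fun x s => ψ x * (ψ (x + s) * s)) (by fun_prop)]
    exact intcongr fun s => by
      rw [hH, ← intervalIntegral.integral_mul_const]
      exact intcongr fun x => by ring
  have fub2 : (∫ s in (0:ℝ)..1, H s) = (∫ x in (0:ℝ)..1, ψ x) ^ 2 := by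
    rw [hH, ← fubini01 (fun x s => ψ x * ψ (x + s)) (by fun_prop)]
    simp_rw [intervalIntegral.integral_const_mul, shift_int ψ hp,
      intervalIntegral.integral_mul_const, pow_two]
  rw [fub1]
  rw [fub2] at key
  linarith

lemma M1'_zero (hφc : Continuous φ) (hφper : ∀ x, φ (x + 1) = φ x) :
    (∫ x in (0:ℝ)..1, W1' φ 0 x)
      = -2 * ((∫ x in (0:ℝ)..1, Real.exp (-φ x)) * (∫ s in (0:ℝ)..1, Real.exp (φ s)))
          * (∫ x in (0:ℝ)..1, Aa φ x)
        - (∫ s in (0:ℝ)..1, Real.exp (φ s)) ^ 2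
          * ((∫ x in (0:ℝ)..1, Real.exp (-φ x)) ^ 2 / 2) := by
  set C := ∫ s in (0:ℝ)..1, Real.exp (φ s) with hC
  have hGcont : Continuous (fun x => ∫ s in (0:ℝ)..1, Real.exp (-φ (x + s)) * s) :=
    intervalIntegral.continuous_parametric_intervalIntegral_of_continuous'
      (f := fun (x : ℝ) (s : ℝ) => Real.exp (-φ (x + s)) * s) (by fun_prop) 0 1
  have step1 : ∀ x, W1' φ 0 x
      = ((-2 * C) * Real.exp (-φ x)) * (∫ x in (0:ℝ)..1, Aa φ x)
        + ((-(C ^ 2)) * Real.exp (-φ x)) * (∫ s in (0:ℝ)..1, Real.exp (-φ (x + s)) * s) := by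
    intro x
    unfold W1'
    have heq : ∀ s,
        (2 * w0 φ 0 (x + s) * W0' φ 0 (x + s)) * Real.exp (φ (x + s) - φ x - 0 * s)
          + (w0 φ 0 (x + s)) ^ 2 * (Real.exp (φ (x + s) - φ x - 0 * s) * (-s))
        = ((-2 * C) * Real.exp (-φ x)) * Aa φ (x + s)
          + ((-(C ^ 2)) * Real.exp (-φ x)) * (Real.exp (-φ (x + s)) * s) := by
      intro s
      rw [w0_zero hφper (x + s), W0'_zero (x + s),
        show φ (x + s) - φ x - 0 * s = φ (x + s) - φ x from by ring]
      simp only [Real.exp_sub, Real.exp_neg]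
      field_simp
      ring
    have hAc : Continuous (Aa φ) := Aa_cont hφc
    rw [intcongr heq, intervalIntegral.integral_add
      ((by fun_prop : Continuous fun s : ℝ =>
        ((-2 * C) * Real.exp (-φ x)) * Aa φ (x + s)).intervalIntegrable _ _)
      ((by fun_prop : Continuous fun s : ℝ =>
        ((-(C ^ 2)) * Real.exp (-φ x)) * (Real.exp (-φ (x + s)) * s)).intervalIntegrable _ _),
      intervalIntegral.integral_const_mul, intervalIntegral.integral_const_mul,
      shift_int (Aa φ) (Aa_per hφper) x]
  have hAc : Continuous (Aa φ) := Aa_cont hφc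
  rw [intcongr step1, intervalIntegral.integral_add
    ((by fun_prop : Continuous fun x : ℝ =>
      ((-2 * C) * Real.exp (-φ x)) * (∫ x in (0:ℝ)..1, Aa φ x)).intervalIntegrable _ _)
    ((show Continuous fun x : ℝ => ((-(C ^ 2)) * Real.exp (-φ x)) *
        (∫ s in (0:ℝ)..1, Real.exp (-φ (x + s)) * s) from
      (continuous_const.mul (by fun_prop : Continuous fun x : ℝ => Real.exp (-φ x))).mul
      hGcont).intervalIntegrable _ _)]
  have e1 : (∫ x in (0:ℝ)..1, ((-2 * C) * Real.exp (-φ x)) * (∫ x in (0:ℝ)..1, Aa φ x))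
      = (-2 * C * (∫ x in (0:ℝ)..1, Aa φ x)) * (∫ x in (0:ℝ)..1, Real.exp (-φ x)) := by
    calc (∫ x in (0:ℝ)..1, ((-2 * C) * Real.exp (-φ x)) * (∫ x in (0:ℝ)..1, Aa φ x))
        = ∫ x in (0:ℝ)..1, Real.exp (-φ x) * (-2 * C * (∫ x in (0:ℝ)..1, Aa φ x)) :=
          intcongr fun x => by ring
      _ = (∫ x in (0:ℝ)..1, Real.exp (-φ x)) * (-2 * C * (∫ x in (0:ℝ)..1, Aa φ x)) :=
          intervalIntegral.integral_mul_const _ _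
      _ = _ := by ring
  have e2 : (∫ x in (0:ℝ)..1, ((-(C ^ 2)) * Real.exp (-φ x)) * (∫ s in (0:ℝ)..1, Real.exp (-φ (x + s)) * s))
      = (-(C ^ 2)) * ((∫ x in (0:ℝ)..1, Real.exp (-φ x)) ^ 2 / 2) := by
    have hJ := Jlemma (ψ := fun u => Real.exp (-φ u)) (by fun_prop)
      (fun u => by simp only [hφper u])
    calc (∫ x in (0:ℝ)..1, ((-(C ^ 2)) * Real.exp (-φ x)) * (∫ s in (0:ℝ)..1, Real.exp (-φ (x + s)) * s))
        = ∫ x in (0:ℝ)..1, (-(C ^ 2)) * (Real.exp (-φ x) * (∫ s in (0:ℝ)..1, Real.exp (-φ (x + s)) * s)) :=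
          intcongr fun x => by ring
      _ = (-(C ^ 2)) * ∫ x in (0:ℝ)..1, Real.exp (-φ x) * (∫ s in (0:ℝ)..1, Real.exp (-φ (x + s)) * s) :=
          intervalIntegral.integral_const_mul _ _
      _ = _ := by rw [hJ]
  rw [e1, e2]
  ring



/-- If `a₁ ≠ a₀/2` (possible only for an asymmetric potential), then
there is a nonzero force `f` with `D(f) < 1/a₀ = D(0)`; in particular the minimum
of the effective diffusion coefficient is attained at a nonzero `f` and is
strictly smaller than `1/a₀`. -/
theorem stmt_14 (φ : ℝ → ℝ) (hφc : Continuous φ) (hφper : ∀ x, φ (x + 1) = φ x)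
    (a0 a1 : ℝ)
    (ha0 : a0 = (∫ x in (0:ℝ)..1, Real.exp (-φ x)) * ∫ s in (0:ℝ)..1, Real.exp (φ s))
    (ha1 : a1 = ∫ x in (0:ℝ)..1, ∫ s in (0:ℝ)..1, Real.exp (φ (x + s) - φ x) * s)
    (D : ℝ → ℝ) (hD : ∀ f, D f = M1 φ f / (M0 φ f) ^ 3)
    (hasym : a1 ≠ a0 / 2) :
    (∃ f : ℝ, f ≠ 0 ∧ D f < 1 / a0) ∧ D 0 = 1 / a0 := by
  obtain ⟨K, hK0, hK⟩ := phi_bound hφc hφper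
  have hB : 0 < ∫ x in (0:ℝ)..1, Real.exp (-φ x) :=
    intervalIntegral.intervalIntegral_pos_of_pos_on
      ((by fun_prop : Continuous fun x : ℝ => Real.exp (-φ x)).intervalIntegrable _ _)
      (fun x _ => Real.exp_pos _) zero_lt_one
  have hC : 0 < ∫ s in (0:ℝ)..1, Real.exp (φ s) :=
    intervalIntegral.intervalIntegral_pos_of_pos_on
      ((by fun_prop : Continuous fun x : ℝ => Real.exp (φ x)).intervalIntegrable _ _)
      (fun x _ => Real.exp_pos _) zero_lt_one
  have ha0pos : 0 < a0 := by rw [ha0]; exact mul_pos hB hC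
  have ha0ne : a0 ≠ 0 := ne_of_gt ha0pos
  have hM00 : M0 φ 0 = a0 := by rw [M0_zero hφper, ha0]
  have hM10 : M1 φ 0 = a0 ^ 2 := by rw [M1_zero hφper, ha0]
  have ha1v : a1 = ∫ x in (0:ℝ)..1, Aa φ x := ha1
  have hM0d : HasDerivAt (M0 φ) (-a1) 0 := by
    have h := M0_hasDerivAt hφc hK 0
    rwa [M0'_zero, ← ha1v] at h
  have hM1d : HasDerivAt (M1 φ) (-2 * a0 * a1 - a0 ^ 2 / 2) 0 := by
    have h := M1_hasDerivAt hφc hK 0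
    rw [M1'_zero hφc hφper] at h
    have hval : -2 * a0 * a1 - a0 ^ 2 / 2
        = -2 * ((∫ x in (0:ℝ)..1, Real.exp (-φ x)) * (∫ s in (0:ℝ)..1, Real.exp (φ s)))
            * (∫ x in (0:ℝ)..1, Aa φ x)
          - (∫ s in (0:ℝ)..1, Real.exp (φ s)) ^ 2
            * ((∫ x in (0:ℝ)..1, Real.exp (-φ x)) ^ 2 / 2) := by
      rw [ha0, ha1v]; ring
    rwa [← hval] at h
  have hD0 : D 0 = 1 / a0 := by
    rw [hD 0, hM00, hM10]
    field_simp
  have hM0cube : HasDerivAt (fun g => (M0 φ g) ^ 3) (3 * (M0 φ 0) ^ 2 * (-a1)) 0 := by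
    have h := hM0d.fun_pow 3
    norm_num at h
    exact h.congr_deriv (by ring)
  have hdenne : (M0 φ 0) ^ 3 ≠ 0 := by rw [hM00]; positivity
  have hDfun : D = fun g => M1 φ g / (M0 φ g) ^ 3 := funext hD
  have hDd : HasDerivAt D
      (((-2 * a0 * a1 - a0 ^ 2 / 2) * (M0 φ 0) ^ 3
        - M1 φ 0 * (3 * (M0 φ 0) ^ 2 * (-a1))) / ((M0 φ 0) ^ 3) ^ 2) 0 := by
    rw [hDfun]
    exact hM1d.div hM0cube hdenne
  have hval2 : ((-2 * a0 * a1 - a0 ^ 2 / 2) * (M0 φ 0) ^ 3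
      - M1 φ 0 * (3 * (M0 φ 0) ^ 2 * (-a1))) / ((M0 φ 0) ^ 3) ^ 2
      = (a1 - a0 / 2) / a0 ^ 2 := by
    rw [hM00, hM10]
    field_simp
    ring
  rw [hval2] at hDd
  have hdne0 : (a1 - a0 / 2) / a0 ^ 2 ≠ 0 :=
    div_ne_zero (sub_ne_zero.2 hasym) (pow_ne_zero 2 ha0ne)
  refine ⟨?_, hD0⟩
  have hs := hasDerivAt_iff_tendsto_slope.1 hDd
  have hslope : ∀ f : ℝ, slope D 0 f = (D f - D 0) / f := by
    intro f
    rw [slope_def_field]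
    ring_nf
  rcases hdne0.lt_or_gt with hneg | hpos
  · have h2 : Tendsto (slope D 0) (𝓝[>] (0:ℝ)) (𝓝 ((a1 - a0 / 2) / a0 ^ 2)) :=
      hs.mono_left (nhdsWithin_mono _ fun y hy => ne_of_gt hy)
    have h3 : ∀ᶠ f in 𝓝[>] (0:ℝ), slope D 0 f < 0 := h2.eventually_lt_const hneg
    obtain ⟨f, hfs, hf0⟩ := (h3.and self_mem_nhdsWithin).exists
    refine ⟨f, ne_of_gt hf0, ?_⟩
    rw [← hD0]
    rw [hslope f] at hfs
    rcases div_neg_iff.1 hfs with ⟨h, h'⟩ | ⟨h, h'⟩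
    · linarith
    · linarith
  · have h2 : Tendsto (slope D 0) (𝓝[<] (0:ℝ)) (𝓝 ((a1 - a0 / 2) / a0 ^ 2)) :=
      hs.mono_left (nhdsWithin_mono _ fun y hy => ne_of_lt hy)
    have h3 : ∀ᶠ f in 𝓝[<] (0:ℝ), 0 < slope D 0 f := h2.eventually_const_lt hpos
    obtain ⟨f, hfs, hf0⟩ := (h3.and self_mem_nhdsWithin).exists
    refine ⟨f, ne_of_lt hf0, ?_⟩
    rw [← hD0]
    rw [hslope f] at hfs
    rcases div_pos_iff.1 hfs with ⟨h, h'⟩ | ⟨h, h'⟩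
    · linarith
    · linarith
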